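/- The linear system of m equations ∑_{j=1}^m α_j ρ_j/(β_k − α_j) = 1 (k = 1, …, m) in the unknowns ρ₁, …, ρ_m has a unique solution, and this solution is given by ρ_j = ((β_j − α_j)/α_j) · ∏_{i=1,…,m, i≠j} (β_i − α_j)/(α_i − α_j) for j = 1, …, m. -/

import Mathlib

/-!
STATEMENT 2: the linear system ∑_{j<m} α_j ρ_j/(β_k − α_j) = 1 (k < m) has a
unique solution, given by ρ_j = ((β_j − α_j)/α_j) · ∏_{i≠j} (β_i − α_j)/(α_i − α_j).
We express existence and uniqueness together as an `iff`.
-/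

open Polynomial Finset

theorem linear_system_unique_solution
    (m : ℕ) (hm : 1 ≤ m)
    (α β : ℕ → ℝ)
    (hα0 : 0 < α 0)
    (hαβ : ∀ j, j < m → α j < β j)
    (hβα : ∀ j, j + 1 < m → β j < α (j + 1)) :
    ∀ ρ : ℕ → ℝ,
      (∀ k, k < m → ∑ j ∈ Finset.range m, α j * ρ j / (β k - α j) = 1) ↔
      (∀ j, j < m → ρ j = ((β j - α j) / α j) *
        ∏ i ∈ (Finset.range m).erase j, (β i - α j) / (α i - α j)) := by
  classical
  -- order facts
  have hstep : ∀ i, i + 1 < m → α i < α (i + 1) :=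
    fun i hi => lt_trans (hαβ i (by omega)) (hβα i hi)
  have hmono : ∀ j, j < m → ∀ i, i < j → α i < α j := by
    intro j
    induction j with
    | zero => intro _ i hi; omega
    | succ n ih =>
      intro hj i hi
      have hn : α n < α (n + 1) := hstep n hj
      rcases Nat.lt_succ_iff_lt_or_eq.mp hi with h | h
      · exact lt_trans (ih (by omega) i h) hn
      · subst h; exact hn
  have hαle : ∀ i j, i ≤ j → j < m → α i ≤ α j := by
    intro i j h hj
    rcases eq_or_lt_of_le h with h' | h'
    · subst h'; exact le_refl _
    · exact (hmono j hj i h').le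
  have hαpos : ∀ j, j < m → 0 < α j := by
    intro j hj
    exact lt_of_lt_of_le hα0 (hαle 0 j (Nat.zero_le j) hj)
  have hβne : ∀ j k, j < m → k < m → β k - α j ≠ 0 := by
    intro j k hj hk
    rcases le_or_gt j k with h | h
    · exact sub_ne_zero.mpr (ne_of_gt (lt_of_le_of_lt (hαle j k h hk) (hαβ k hk)))
    · have h1 : β k < α (k + 1) := hβα k (by omega)
      have h2 : α (k + 1) ≤ α j := hαle (k + 1) j (by omega) hj
      exact sub_ne_zero.mpr (ne_of_lt (lt_of_lt_of_le h1 h2))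
  have hαne : ∀ i j, i < m → j < m → i ≠ j → α i - α j ≠ 0 := by
    intro i j hi hj hij
    rcases lt_or_gt_of_ne hij with h | h
    · exact sub_ne_zero.mpr (ne_of_lt (hmono j hj i h))
    · exact sub_ne_zero.mpr (ne_of_gt (hmono i hi j h))
  have hβmono : ∀ k l, k < l → l < m → β k < β l := by
    intro k l h hl
    have h1 : β k < α (k + 1) := hβα k (by omega)
    have h2 : α (k + 1) ≤ α l := hαle (k + 1) l (by omega) hl
    exact lt_of_lt_of_le h1 (le_of_lt (lt_of_le_of_lt h2 (hαβ l hl)))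
  have hβinj : ∀ k l, k < m → l < m → β k = β l → k = l := by
    intro k l hk hl h
    by_contra hne
    rcases lt_or_gt_of_ne hne with h' | h'
    · exact absurd h (ne_of_lt (hβmono k l h' hl))
    · exact absurd h.symm (ne_of_lt (hβmono l k h' hk))
  -- polynomials
  set s : Finset ℕ := Finset.range m with hsdef
  set N : Polynomial ℝ := ∏ i ∈ s, (X - C (α i)) with hNdef
  set Bp : Polynomial ℝ := ∏ i ∈ s, (X - C (β i)) with hBdef
  set L : ℕ → Polynomial ℝ := fun j => ∏ i ∈ s.erase j, (X - C (α i)) with hLdef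
  set c : ℕ → ℝ := fun j =>
    (∏ i ∈ s, (β i - α j)) / (∏ i ∈ s.erase j, (α i - α j)) with hcdef
  have hmem : ∀ j, j ∈ s ↔ j < m := by intro j; simp [hsdef]
  have hNeval : ∀ x, N.eval x = ∏ i ∈ s, (x - α i) := by
    intro x; simp [hNdef, eval_prod]
  have hBeval : ∀ x, Bp.eval x = ∏ i ∈ s, (x - β i) := by
    intro x; simp [hBdef, eval_prod]
  have hLeval : ∀ j x, (L j).eval x = ∏ i ∈ s.erase j, (x - α i) := by
    intro j x; simp [hLdef, eval_prod]
  -- nonvanishing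
  have hprodβα : ∀ j, j < m → (∏ i ∈ s, (β i - α j)) ≠ 0 := by
    intro j hj
    exact Finset.prod_ne_zero_iff.mpr fun i hi => hβne j i hj ((hmem i).mp hi)
  have hprodαα : ∀ j, j < m → (∏ i ∈ s.erase j, (α i - α j)) ≠ 0 := by
    intro j hj
    refine Finset.prod_ne_zero_iff.mpr fun i hi => ?_
    have hi' := Finset.mem_erase.mp hi
    exact hαne i j ((hmem i).mp hi'.2) hj hi'.1
  have hLα : ∀ j, j < m → (L j).eval (α j) ≠ 0 := by
    intro j hj
    rw [hLeval]
    refine Finset.prod_ne_zero_iff.mpr fun i hi => ?_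
    have hi' := Finset.mem_erase.mp hi
    exact hαne j i hj ((hmem i).mp hi'.2) (Ne.symm hi'.1)
  have hLβ : ∀ j k, k < m → (L j).eval (β k) ≠ 0 := by
    intro j k hk
    rw [hLeval]
    refine Finset.prod_ne_zero_iff.mpr fun i hi => ?_
    have hi' := Finset.mem_erase.mp hi
    exact hβne i k ((hmem i).mp hi'.2) hk
  have hNβ : ∀ k, k < m → N.eval (β k) ≠ 0 := by
    intro k hk
    rw [hNeval]
    exact Finset.prod_ne_zero_iff.mpr fun i hi => hβne i k ((hmem i).mp hi) hk
  have hNα : ∀ j, j ∈ s → N.eval (α j) = 0 := by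
    intro j hj
    rw [hNeval]
    exact Finset.prod_eq_zero hj (sub_self _)
  have hBβ : ∀ k, k ∈ s → Bp.eval (β k) = 0 := by
    intro k hk
    rw [hBeval]
    exact Finset.prod_eq_zero hk (sub_self _)
  -- key relation
  have hNL : ∀ j, j ∈ s → ∀ x, N.eval x = (x - α j) * (L j).eval x := by
    intro j hj x
    rw [hNeval, hLeval, ← Finset.mul_prod_erase s _ hj]
  -- evaluation of sums of C d * L at nodes
  have hSev : ∀ (d : ℕ → ℝ) (j : ℕ), j ∈ s →
      (∑ i ∈ s, C (d i) * L i).eval (α j) = d j * (L j).eval (α j) := by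
    intro d j hj
    rw [eval_finset_sum, Finset.sum_eq_single j]
    · simp
    · intro i hi hij
      have hz : (L i).eval (α j) = 0 := by
        rw [hLeval]
        exact Finset.prod_eq_zero (Finset.mem_erase.mpr ⟨Ne.symm hij, hj⟩) (sub_self _)
      simp [hz]
    · intro h; exact absurd hj h
  -- sign lemma : c j * (L j).eval (α j) = - Bp.eval (α j)
  have hsign : ∀ j, j < m → c j * (L j).eval (α j) = - Bp.eval (α j) := by
    intro j hj
    have hjs : j ∈ s := (hmem j).mpr hj
    have hcards : s.card = m := by simp [hsdef]
    have hcarde : (s.erase j).card = m - 1 := by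
      rw [Finset.card_erase_of_mem hjs, hcards]
    have h1 : (L j).eval (α j) = (-1 : ℝ) ^ (m - 1) * ∏ i ∈ s.erase j, (α i - α j) := by
      rw [hLeval, ← hcarde, ← Finset.prod_const, ← Finset.prod_mul_distrib]
      exact Finset.prod_congr rfl fun i _ => by ring
    have h2 : Bp.eval (α j) = (-1 : ℝ) ^ m * ∏ i ∈ s, (β i - α j) := by
      rw [hBeval, ← hcards, ← Finset.prod_const, ← Finset.prod_mul_distrib]
      exact Finset.prod_congr rfl fun i _ => by ring
    have hpow : (-1 : ℝ) ^ m = -(-1 : ℝ) ^ (m - 1) := by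
      conv_lhs => rw [show m = (m - 1) + 1 by omega]
      rw [pow_succ]; ring
    have hne := hprodαα j hj
    have hc : c j = (∏ i ∈ s, (β i - α j)) / (∏ i ∈ s.erase j, (α i - α j)) := by
      simp [hcdef]
    rw [h1, h2, hpow, hc]
    field_simp
  -- degrees
  have hcards : s.card = m := by simp [hsdef]
  have hNmonic : N.Monic := monic_prod_of_monic _ _ fun i _ => monic_X_sub_C _
  have hBmonic : Bp.Monic := monic_prod_of_monic _ _ fun i _ => monic_X_sub_C _
  have hNdeg : N.natDegree = m := by
    rw [hNdef, natDegree_prod_of_monic _ _ fun i _ => monic_X_sub_C _]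
    simp [hcards]
  have hBdeg : Bp.natDegree = m := by
    rw [hBdef, natDegree_prod_of_monic _ _ fun i _ => monic_X_sub_C _]
    simp [hcards]
  have hLdeg : ∀ j, j ∈ s → (L j).natDegree = m - 1 := by
    intro j hj
    rw [hLdef]
    rw [natDegree_prod_of_monic _ _ fun i _ => monic_X_sub_C _]
    simp [Finset.card_erase_of_mem hj, hcards]
  have hNBdeg : (N - Bp).natDegree < m := by
    rcases eq_or_ne N Bp with h | h
    · simp [h]; omega
    · have hd : (N - Bp).degree < N.degree := by
        apply degree_sub_lt
        · rw [degree_eq_natDegree hNmonic.ne_zero, degree_eq_natDegree hBmonic.ne_zero,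
            hNdeg, hBdeg]
        · exact hNmonic.ne_zero
        · rw [hNmonic.leadingCoeff, hBmonic.leadingCoeff]
      have hlt := natDegree_lt_natDegree (sub_ne_zero.mpr h) hd
      omega
  have hPdeg : ∀ d : ℕ → ℝ,
      ((∑ j ∈ s, C (d j) * L j) - (N - Bp)).natDegree < m := by
    intro d
    have h1 : (∑ j ∈ s, C (d j) * L j).natDegree ≤ m - 1 := by
      apply natDegree_sum_le_of_forall_le
      intro j hj
      exact le_trans (natDegree_C_mul_le _ _) (le_of_eq (hLdeg j hj))
    have h2 := natDegree_sub_le (∑ j ∈ s, C (d j) * L j) (N - Bp)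
    omega
  -- zero lemmas
  have hzeroβ : ∀ p : Polynomial ℝ, p.natDegree < m →
      (∀ k, k < m → p.eval (β k) = 0) → p = 0 := by
    intro p hdeg hev
    refine Polynomial.eq_zero_of_natDegree_lt_card_of_eval_eq_zero' p (s.image β) ?_ ?_
    · intro x hx
      rcases Finset.mem_image.mp hx with ⟨k, hk, rfl⟩
      exact hev k ((hmem k).mp hk)
    · rwa [Finset.card_image_of_injOn (fun a ha b hb h =>
        hβinj a b ((hmem a).mp ha) ((hmem b).mp hb) h), hcards]
  have hzeroα : ∀ p : Polynomial ℝ, p.natDegree < m →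
      (∀ k, k < m → p.eval (α k) = 0) → p = 0 := by
    intro p hdeg hev
    refine Polynomial.eq_zero_of_natDegree_lt_card_of_eval_eq_zero' p (s.image α) ?_ ?_
    · intro x hx
      rcases Finset.mem_image.mp hx with ⟨k, hk, rfl⟩
      exact hev k ((hmem k).mp hk)
    · rw [Finset.card_image_of_injOn, hcards]
      · exact hdeg
      · intro a ha b hb h
        by_contra hne
        exact hαne a b ((hmem a).mp ha) ((hmem b).mp hb) hne (sub_eq_zero.mpr h)
  -- master identity
  have hmaster : (∑ j ∈ s, C (c j) * L j) = N - Bp := by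
    have h0 : (∑ j ∈ s, C (c j) * L j) - (N - Bp) = 0 := by
      apply hzeroα _ (hPdeg c)
      intro k hk
      have hks : k ∈ s := (hmem k).mpr hk
      rw [eval_sub, eval_sub, hSev c k hks, hNα k hks, hsign k hk]
      ring
    exact sub_eq_zero.mp h0
  -- consequence at β k
  have hcsum : ∀ k, k < m → ∑ j ∈ s, c j / (β k - α j) = 1 := by
    intro k hk
    have hks : k ∈ s := (hmem k).mpr hk
    have hev : ∑ j ∈ s, c j * (L j).eval (β k) = N.eval (β k) := by
      have h := congrArg (fun p => Polynomial.eval (β k) p) hmaster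
      simpa [eval_finset_sum, hBβ k hks] using h
    have hterm : ∀ j ∈ s, c j / (β k - α j) = c j * (L j).eval (β k) / N.eval (β k) := by
      intro j hj
      have hjm := (hmem j).mp hj
      have hb := hβne j k hjm hk
      have hL := hLβ j k hk
      rw [hNL j hj (β k)]
      field_simp
    rw [Finset.sum_congr rfl hterm, ← Finset.sum_div, hev, div_self (hNβ k hk)]
  -- formula in terms of c
  have hform : ∀ j, j < m →
      ((β j - α j) / α j) * ∏ i ∈ s.erase j, (β i - α j) / (α i - α j) = c j / α j := by
    intro j hj
    have hjs : j ∈ s := (hmem j).mpr hj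
    have hexp : ∏ i ∈ s, (β i - α j) = (β j - α j) * ∏ i ∈ s.erase j, (β i - α j) :=
      (Finset.mul_prod_erase s _ hjs).symm
    have hc : c j = (∏ i ∈ s, (β i - α j)) / (∏ i ∈ s.erase j, (α i - α j)) := by
      simp [hcdef]
    rw [Finset.prod_div_distrib, hc, hexp]
    have h1 := hprodαα j hj
    have h2 := (hαpos j hj).ne'
    field_simp
  -- main statement
  intro ρ
  constructor
  · -- uniqueness
    intro hsys j hj
    have hjs : j ∈ s := (hmem j).mpr hj
    have hP : (∑ i ∈ s, C (α i * ρ i) * L i) - (N - Bp) = 0 := by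
      apply hzeroβ _ (hPdeg _)
      intro k hk
      have hks : k ∈ s := (hmem k).mpr hk
      have hterm : ∀ i ∈ s,
          α i * ρ i / (β k - α i) = α i * ρ i * (L i).eval (β k) / N.eval (β k) := by
        intro i hi
        have him := (hmem i).mp hi
        have hb := hβne i k him hk
        have hL := hLβ i k hk
        rw [hNL i hi (β k)]
        field_simp
      have h1 : (∑ i ∈ s, α i * ρ i * (L i).eval (β k)) / N.eval (β k) = 1 := by
        calc (∑ i ∈ s, α i * ρ i * (L i).eval (β k)) / N.eval (β k)
            = ∑ i ∈ s, α i * ρ i * (L i).eval (β k) / N.eval (β k) := by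
              rw [Finset.sum_div]
          _ = ∑ i ∈ s, α i * ρ i / (β k - α i) := (Finset.sum_congr rfl hterm).symm
          _ = 1 := hsys k hk
      have hev : ∑ i ∈ s, α i * ρ i * (L i).eval (β k) = N.eval (β k) :=
        (div_eq_one_iff_eq (hNβ k hk)).mp h1
      rw [eval_sub, eval_sub, eval_finset_sum]
      simp only [eval_mul, eval_C]
      rw [hev, hBβ k hks]
      ring
    have hPev := congrArg (fun p => Polynomial.eval (α j) p) hP
    simp only [eval_sub, eval_zero] at hPev
    rw [hSev (fun i => α i * ρ i) j hjs, hNα j hjs] at hPev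
    have hcancel : α j * ρ j * (L j).eval (α j) = c j * (L j).eval (α j) := by
      rw [hsign j hj]; linarith
    have hc : α j * ρ j = c j := mul_right_cancel₀ (hLα j hj) hcancel
    rw [hform j hj]
    rw [eq_div_iff (hαpos j hj).ne']
    linarith [hc]
  · -- existence
    intro hρ k hk
    have hterm : ∀ j ∈ s, α j * ρ j / (β k - α j) = c j / (β k - α j) := by
      intro j hjs
      have hj := (hmem j).mp hjs
      have hcj : α j * ρ j = c j := by
        rw [hρ j hj, hform j hj, mul_comm]
        exact div_mul_cancel₀ _ (hαpos j hj).ne'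
      rw [hcj]
    rw [Finset.sum_congr rfl hterm]
    exact hcsum k hk
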